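/- Let g : ZMod N → ℂ be a generator such that ⟨g, Π_{(0,ℓ)} g⟩ = 0 for every ℓ ∈ ZMod N with ℓ ≠ 0. Then the Gabor system (g_λ)_{λ ∈ (ZMod N)²} does not allow phase retrieval: there exist x, y : ZMod N → ℂ with |⟨x, g_λ⟩| = |⟨y, g_λ⟩| for every λ ∈ (ZMod N)², yet x ≠ c • y for every c ∈ ℂ with |c| = 1. -/

import Mathlib

open Complex Finset

/-- `gw N m = ω^m` where `ω = exp(2πi/N)` and `m : ZMod N`. -/
noncomputable def gw (N : ℕ) (m : ZMod N) : ℂ :=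
  Complex.exp (2 * Real.pi * Complex.I * (m.val : ℂ) / (N : ℂ))

/-- Translation operator `(T_p x)(n) = x(n-p)`. -/
def Tr (N : ℕ) (p : ZMod N) (x : ZMod N → ℂ) : ZMod N → ℂ :=
  fun n => x (n - p)

/-- Modulation operator `(M_ℓ x)(n) = ω^{ℓ·n} x(n)`. -/
noncomputable def Md (N : ℕ) (l : ZMod N) (x : ZMod N → ℂ) : ZMod N → ℂ :=
  fun n => gw N (l * n) * x n

/-- Time-frequency shift `Π_{(p,ℓ)} = M_ℓ ∘ T_p`. -/
noncomputable def Pig (N : ℕ) (p l : ZMod N) (x : ZMod N → ℂ) : ZMod N → ℂ :=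
  Md N l (Tr N p x)

/-- Inner product, conjugate linear in the first argument. -/
noncomputable def inn (N : ℕ) [NeZero N] (x y : ZMod N → ℂ) : ℂ :=
  ∑ j : ZMod N, (starRingEnd ℂ) (x j) * y j

noncomputable def zet (N : ℕ) : ℂ := Complex.exp (2 * Real.pi * Complex.I / (N : ℂ))

lemma zet_prim (N : ℕ) [NeZero N] : IsPrimitiveRoot (zet N) N :=
  Complex.isPrimitiveRoot_exp N (NeZero.ne N)

lemma gw_eq (N : ℕ) (m : ZMod N) : gw N m = (zet N) ^ m.val := by
  rw [gw, zet, ← Complex.exp_nat_mul]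
  ring_nf

lemma zet_pow_mod (N : ℕ) [NeZero N] (k : ℕ) : (zet N) ^ (k % N) = (zet N) ^ k := by
  conv_rhs => rw [← Nat.mod_add_div k N]
  rw [pow_add, pow_mul, (zet_prim N).pow_eq_one, one_pow, mul_one]

lemma gw_add (N : ℕ) [NeZero N] (a b : ZMod N) : gw N (a + b) = gw N a * gw N b := by
  rw [gw_eq, gw_eq, gw_eq, ZMod.val_add, zet_pow_mod, pow_add]

lemma gw_zero (N : ℕ) [NeZero N] : gw N 0 = 1 := by
  simp [gw]

lemma gw_abs (N : ℕ) [NeZero N] (m : ZMod N) : ‖gw N m‖ = 1 := by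
  have h : (2 * Real.pi * Complex.I * (m.val : ℂ) / (N : ℂ))
      = ((2 * Real.pi * m.val / N : ℝ) : ℂ) * Complex.I := by
    push_cast; ring
  rw [gw, h, Complex.norm_exp_ofReal_mul_I]

lemma gw_conj (N : ℕ) [NeZero N] (m : ZMod N) :
    (starRingEnd ℂ) (gw N m) = gw N (-m) := by
  have h1 : gw N m * gw N (-m) = 1 := by
    rw [← gw_add, add_neg_cancel, gw_zero]
  have h2 : (starRingEnd ℂ) (gw N m) * gw N m = 1 := by
    rw [Complex.conj_mul', gw_abs]; norm_num
  calc (starRingEnd ℂ) (gw N m) = (starRingEnd ℂ) (gw N m) * (gw N m * gw N (-m)) := by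
        rw [h1, mul_one]
    _ = gw N (-m) := by rw [← mul_assoc, h2, one_mul]

lemma sum_zmod_val (N : ℕ) [NeZero N] (f : ℕ → ℂ) :
    ∑ l : ZMod N, f l.val = ∑ k ∈ Finset.range N, f k := by
  rcases N with _ | n
  · exact absurd rfl (NeZero.ne 0)
  · exact Fin.sum_univ_eq_sum_range (fun k => f k) (n + 1)

lemma gw_ortho (N : ℕ) [NeZero N] (m : ZMod N) (hm : m ≠ 0) :
    ∑ l : ZMod N, gw N (l * m) = 0 := by
  have key : ∀ l : ZMod N, gw N (l * m) = ((zet N) ^ m.val) ^ l.val := by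
    intro l
    rw [gw_eq, ZMod.val_mul, zet_pow_mod, mul_comm l.val, pow_mul]
  simp_rw [key]
  rw [sum_zmod_val N (fun k => ((zet N) ^ m.val) ^ k)]
  have hz1 : (zet N) ^ m.val ≠ 1 := by
    have hpos : 0 < m.val := Nat.pos_of_ne_zero (fun h0 => hm ((ZMod.val_eq_zero m).mp h0))
    exact (zet_prim N).pow_ne_one_of_pos_of_lt hpos.ne' (ZMod.val_lt m)
  rw [geom_sum_eq hz1]
  have hN1 : ((zet N) ^ m.val) ^ N = 1 := by
    rw [← pow_mul, mul_comm, pow_mul, (zet_prim N).pow_eq_one, one_pow]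
  rw [hN1, sub_self, zero_div]

lemma inn_delta (N : ℕ) [NeZero N] (a : ZMod N) (y : ZMod N → ℂ) :
    inn N (fun n => if n = a then 1 else 0) y = y a := by
  simp [inn, apply_ite (starRingEnd ℂ), ite_mul]

lemma abs_const (N : ℕ) [NeZero N] (g : ZMod N → ℂ)
    (hg : ∀ l : ZMod N, l ≠ 0 → inn N g (Pig N 0 l g) = 0) (a b : ZMod N) :
    ‖g a‖ = ‖g b‖ := by
  set F : ZMod N → ℂ := fun j => (starRingEnd ℂ) (g j) * g j with hF
  have hS : ∀ l : ZMod N, l ≠ 0 → ∑ j : ZMod N, F j * gw N (l * j) = 0 := by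
    intro l hl
    have h := hg l hl
    rw [inn] at h
    simp only [Pig, Md, Tr, sub_zero] at h
    rw [← h]
    exact Finset.sum_congr rfl (fun j _ => by rw [hF]; ring)
  have key : ∀ a : ZMod N, (N : ℂ) * F a = ∑ j : ZMod N, F j := by
    intro a
    have e1 : ∑ l : ZMod N, gw N (-(l * a)) * (∑ j : ZMod N, F j * gw N (l * j))
        = ∑ j : ZMod N, F j := by
      rw [Finset.sum_eq_single 0]
      · simp [gw_zero]
      · intro l _ hl
        rw [hS l hl, mul_zero]
      · simp
    rw [← e1]; symm
    calc ∑ l : ZMod N, gw N (-(l * a)) * (∑ j : ZMod N, F j * gw N (l * j))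
        = ∑ l : ZMod N, ∑ j : ZMod N, F j * gw N (l * (j - a)) := by
          refine Finset.sum_congr rfl (fun l _ => ?_)
          rw [Finset.mul_sum]
          refine Finset.sum_congr rfl (fun j _ => ?_)
          rw [show l * (j - a) = -(l * a) + l * j by ring, gw_add]; ring
      _ = ∑ j : ZMod N, ∑ l : ZMod N, F j * gw N (l * (j - a)) := Finset.sum_comm
      _ = ∑ j : ZMod N, F j * ∑ l : ZMod N, gw N (l * (j - a)) := by
          simp_rw [Finset.mul_sum]
      _ = (N : ℂ) * F a := by
          rw [Finset.sum_eq_single a]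
          · simp [gw_zero, ZMod.card, mul_comm]
          · intro j _ hj
            rw [gw_ortho N (j - a) (sub_ne_zero.mpr hj), mul_zero]
          · simp
  have hFab : F a = F b := by
    have h := (key a).trans (key b).symm
    exact mul_left_cancel₀ (Nat.cast_ne_zero.mpr (NeZero.ne N)) h
  have h2 : ((‖g a‖ : ℂ)) ^ 2 = ((‖g b‖ : ℂ)) ^ 2 := by
    rw [← Complex.conj_mul', ← Complex.conj_mul']; exact hFab
  have h3 : ‖g a‖ ^ 2 = ‖g b‖ ^ 2 := by exact_mod_cast h2
  have h4 : ‖g a‖ = ‖g b‖ := by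
    nlinarith [norm_nonneg (g a), norm_nonneg (g b)]
  simpa using h4

/-- If `⟨g, Π_{(0,ℓ)} g⟩ = 0` for all `ℓ ≠ 0`, then the Gabor system does not
allow phase retrieval. -/
theorem no_phase_retrieval_vanishing_diagonal (N : ℕ) [NeZero N] (hN : 2 ≤ N)
    (g : ZMod N → ℂ)
    (hg : ∀ l : ZMod N, l ≠ 0 → inn N g (Pig N 0 l g) = 0) :
    ∃ x y : ZMod N → ℂ,
      (∀ p l : ZMod N,
        ‖inn N x (Pig N p l g)‖ = ‖inn N y (Pig N p l g)‖) ∧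
      ∀ c : ℂ, ‖c‖ = 1 → x ≠ c • y := by
  refine ⟨(fun n => if n = 0 then 1 else 0), (fun n => if n = 1 then 1 else 0), ?_, ?_⟩
  · intro p l
    rw [inn_delta, inn_delta]
    simp only [Pig, Md, Tr]
    rw [norm_mul, norm_mul, gw_abs, gw_abs, one_mul, one_mul]
    exact abs_const N g hg _ _
  · intro c hc h
    haveI : Fact (1 < N) := ⟨hN⟩
    have h0 := congrFun h 0
    simp only [Pi.smul_apply, smul_eq_mul, if_pos rfl] at h0
    rw [if_neg (zero_ne_one (α := ZMod N)), mul_zero] at h0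
    exact one_ne_zero h0
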